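/- Let P ∈ ℝ^{n×n} be a row-stochastic matrix with stationary distribution π, let α ∈ (0,1) and λ ∈ [0,1), and let M := (1−λ) · Σ_{m=0}^∞ λ^m α^{m+1} P^{m+1} (the series converges since αλ < 1 and α < 1). Then for every J ∈ ℝ^n, ‖M J‖_D ≤ (α(1−λ)/(1−αλ)) · ‖J‖_D. -/

import Mathlib

open Matrix

/-- The weighted quadratic norm `‖J‖_D = √(∑ i, π i · J i²)` associated with a weight
vector `π`. -/
noncomputable def normD {n : ℕ} (pi : Fin n → ℝ) (J : Fin n → ℝ) : ℝ :=
  Real.sqrt (∑ i, pi i * (J i) ^ 2)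

attribute [local instance] Matrix.normedAddCommGroup Matrix.normedSpace

lemma normD_eq_norm {n : ℕ} (pi : Fin n → ℝ) (hpi0 : ∀ i, 0 ≤ pi i) (J : Fin n → ℝ)
    (x : EuclideanSpace ℝ (Fin n)) (hx : ∀ i, x i = Real.sqrt (pi i) * J i) :
    normD pi J = ‖x‖ := by
  rw [EuclideanSpace.norm_eq, normD]
  congr 1
  refine Finset.sum_congr rfl fun i _ => ?_
  rw [hx i, Real.norm_eq_abs, sq_abs, mul_pow, Real.sq_sqrt (hpi0 i)]

/-- contraction for a stochastic matrix with stationary distribution pi -/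
lemma normD_mulVec_le {n : ℕ} (Q : Matrix (Fin n) (Fin n) ℝ)
    (hQ0 : ∀ i j, 0 ≤ Q i j) (hQ1 : ∀ i, ∑ j, Q i j = 1)
    (pi : Fin n → ℝ) (hpi0 : ∀ i, 0 ≤ pi i)
    (hstat : ∀ j, ∑ i, pi i * Q i j = pi j) (J : Fin n → ℝ) :
    normD pi (Q.mulVec J) ≤ normD pi J := by
  apply Real.sqrt_le_sqrt
  have key : ∀ i, (Q.mulVec J i) ^ 2 ≤ ∑ j, Q i j * (J j) ^ 2 := by
    intro i
    have h := Finset.sum_mul_sq_le_sq_mul_sq Finset.univ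
      (fun j => Real.sqrt (Q i j)) (fun j => Real.sqrt (Q i j) * J j)
    have e1 : ∀ j, Real.sqrt (Q i j) * (Real.sqrt (Q i j) * J j) = Q i j * J j := by
      intro j; rw [← mul_assoc, Real.mul_self_sqrt (hQ0 i j)]
    have e2 : ∀ j, Real.sqrt (Q i j) ^ 2 = Q i j := fun j => Real.sq_sqrt (hQ0 i j)
    have e3 : ∀ j, (Real.sqrt (Q i j) * J j) ^ 2 = Q i j * (J j) ^ 2 := by
      intro j; rw [mul_pow, e2]
    simp only [e1, e2, e3] at h
    rw [hQ1 i, one_mul] at h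
    simpa [Matrix.mulVec, dotProduct] using h
  calc ∑ i, pi i * (Q.mulVec J i) ^ 2
      ≤ ∑ i, pi i * ∑ j, Q i j * (J j) ^ 2 := by
        refine Finset.sum_le_sum fun i _ => mul_le_mul_of_nonneg_left (key i) (hpi0 i)
    _ = ∑ j, (∑ i, pi i * Q i j) * (J j) ^ 2 := by
        simp_rw [Finset.mul_sum, Finset.sum_mul]
        rw [Finset.sum_comm]
        congr 1; ext j; congr 1; ext i; ring
    _ = ∑ j, pi j * (J j) ^ 2 := by simp_rw [hstat]

/-- if `P` is row-stochastic with stationary distribution `π`, `α ∈ (0,1)`,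
`λ ∈ [0,1)` and `M = (1−λ) ∑_{m=0}^∞ λ^m α^{m+1} P^{m+1}`, then
`‖M J‖_D ≤ (α(1−λ)/(1−αλ)) ‖J‖_D` for every `J`. -/
theorem TD_matrix_M_normD_bound
    {n : ℕ} (P : Matrix (Fin n) (Fin n) ℝ)
    (hP0 : ∀ i j, 0 ≤ P i j) (hP1 : ∀ i, ∑ j, P i j = 1)
    (pi : Fin n → ℝ) (hpi0 : ∀ i, 0 < pi i) (hpi1 : ∑ i, pi i = 1)
    (hstat : ∀ j, ∑ i, pi i * P i j = pi j)
    (α lam : ℝ) (hα0 : 0 < α) (hα1 : α < 1) (hlam0 : 0 ≤ lam) (hlam1 : lam < 1)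
    (M : Matrix (Fin n) (Fin n) ℝ)
    (hM : M = (1 - lam) • ∑' m : ℕ, (lam ^ m * α ^ (m + 1)) • P ^ (m + 1))
    (J : Fin n → ℝ) :
    normD pi (M.mulVec J) ≤ (α * (1 - lam) / (1 - α * lam)) * normD pi J := by
  have hpi0' : ∀ i, (0:ℝ) ≤ pi i := fun i => (hpi0 i).le
  have hpow : ∀ k : ℕ, (∀ i j, 0 ≤ (P ^ k) i j) ∧ (∀ i, ∑ j, (P ^ k) i j = 1) ∧
      (∀ j, ∑ i, pi i * (P ^ k) i j = pi j) := by
    intro k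
    induction k with
    | zero =>
      refine ⟨fun i j => ?_, fun i => ?_, fun j => ?_⟩ <;>
        simp [Matrix.one_apply, Finset.sum_ite_eq', Finset.sum_ite_eq]
      · positivity
    | succ k ih =>
      obtain ⟨h0, h1, h2⟩ := ih
      have happly : ∀ i j, (P ^ (k+1)) i j = ∑ l, (P ^ k) i l * P l j := by
        intro i j; rw [pow_succ, Matrix.mul_apply]
      refine ⟨fun i j => ?_, fun i => ?_, fun j => ?_⟩
      · rw [happly]
        exact Finset.sum_nonneg fun l _ => mul_nonneg (h0 i l) (hP0 l j)
      · simp_rw [happly]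
        rw [Finset.sum_comm]
        simp_rw [← Finset.mul_sum, hP1]
        simpa using h1 i
      · simp_rw [happly, Finset.mul_sum]
        rw [Finset.sum_comm]
        calc ∑ l, ∑ i, pi i * ((P ^ k) i l * P l j)
            = ∑ l, (∑ i, pi i * (P ^ k) i l) * P l j := by
              congr 1; ext l; rw [Finset.sum_mul]; congr 1; ext i; ring
          _ = ∑ l, pi l * P l j := by simp_rw [h2]
          _ = pi j := hstat j
  set c : ℕ → ℝ := fun m => lam ^ m * α ^ (m + 1) with hc
  have hc0 : ∀ m, 0 ≤ c m := fun m => mul_nonneg (pow_nonneg hlam0 m) (pow_nonneg hα0.le _)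
  have hceq : ∀ m, c m = α * (lam * α) ^ m := by
    intro m; simp only [hc, pow_succ, mul_pow]; ring
  have hla0 : 0 ≤ lam * α := mul_nonneg hlam0 hα0.le
  have hla1 : lam * α < 1 :=
    lt_of_le_of_lt (mul_le_of_le_one_right hlam0 hα1.le) hlam1
  have hcsum : Summable c := by
    simp_rw [funext hceq]
    exact (summable_geometric_of_lt_one hla0 hla1).mul_left α
  have hctsum : ∑' m, c m = α * (1 - lam * α)⁻¹ := by
    simp_rw [funext hceq]
    rw [tsum_mul_left, tsum_geometric_of_lt_one hla0 hla1]
  have hSnorm : ∀ m : ℕ, ‖(c m) • P ^ (m + 1)‖ ≤ c m := by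
    intro m
    rw [norm_smul, Real.norm_eq_abs, abs_of_nonneg (hc0 m)]
    have h1 : ‖P ^ (m+1)‖ ≤ 1 := by
      rw [Matrix.norm_le_iff zero_le_one]
      intro i j
      rw [Real.norm_eq_abs, abs_of_nonneg ((hpow (m+1)).1 i j)]
      calc (P ^ (m+1)) i j ≤ ∑ l, (P ^ (m+1)) i l :=
            Finset.single_le_sum (fun l _ => (hpow (m+1)).1 i l) (Finset.mem_univ j)
        _ = 1 := (hpow (m+1)).2.1 i
    calc c m * ‖P ^ (m+1)‖ ≤ c m * 1 := mul_le_mul_of_nonneg_left h1 (hc0 m)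
      _ = c m := mul_one _
  have hSsum : Summable (fun m : ℕ => (c m) • P ^ (m + 1)) :=
    Summable.of_norm_bounded hcsum hSnorm
  -- mulVec as a continuous linear map
  let Φ : Matrix (Fin n) (Fin n) ℝ →L[ℝ] (Fin n → ℝ) :=
    LinearMap.toContinuousLinearMap
      { toFun := fun A => A.mulVec J
        map_add' := fun A B => Matrix.add_mulVec A B J
        map_smul' := fun r A => Matrix.smul_mulVec r A J }
  have hΦ : ∀ A, Φ A = A.mulVec J := fun A => rfl
  have hMv : M.mulVec J = (1 - lam) • ∑' m, (c m) • ((P ^ (m+1)).mulVec J) := by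
    rw [hM, Matrix.smul_mulVec, ← hΦ, ContinuousLinearMap.map_tsum Φ hSsum]
    congr 1
    refine tsum_congr fun m => ?_
    rw [hΦ, Matrix.smul_mulVec]
  -- the embedding into Euclidean space
  let f : (Fin n → ℝ) →L[ℝ] EuclideanSpace ℝ (Fin n) :=
    LinearMap.toContinuousLinearMap
      { toFun := fun v => (WithLp.toLp 2 (fun i => Real.sqrt (pi i) * v i) : EuclideanSpace ℝ (Fin n))
        map_add' := fun v w => by ext i; simp [mul_add]
        map_smul' := fun r v => by
          ext i
          simp only [RingHom.id_apply, PiLp.smul_apply, smul_eq_mul, Pi.smul_apply, PiLp.toLp_apply]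
          ring }
  have hf : ∀ v, normD pi v = ‖f v‖ := fun v => normD_eq_norm pi hpi0' v (f v) (fun i => rfl)
  set w : ℕ → (Fin n → ℝ) := fun m => (c m) • ((P ^ (m+1)).mulVec J) with hw
  have hwnorm : ∀ m, ‖f (w m)‖ ≤ c m * normD pi J := by
    intro m
    rw [hw]
    simp only [_root_.map_smul, norm_smul, Real.norm_eq_abs, abs_of_nonneg (hc0 m)]
    refine mul_le_mul_of_nonneg_left ?_ (hc0 m)
    rw [← hf]
    exact normD_mulVec_le _ (hpow (m+1)).1 (hpow (m+1)).2.1 pi hpi0' (hpow (m+1)).2.2 J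
  -- summability of w (in the sup norm on Fin n → ℝ)
  have hwsum : Summable w := by
    refine Summable.of_norm_bounded (hcsum.mul_right ‖J‖) fun m => ?_
    rw [hw]
    simp only [norm_smul, Real.norm_eq_abs, abs_of_nonneg (hc0 m)]
    refine mul_le_mul_of_nonneg_left ?_ (hc0 m)
    refine (pi_norm_le_iff_of_nonneg (norm_nonneg J)).2 fun i => ?_
    rw [Real.norm_eq_abs]
    have hmv : (P ^ (m+1)).mulVec J i = ∑ j, (P ^ (m+1)) i j * J j := by
      simp [Matrix.mulVec, dotProduct]
    rw [hmv]
    calc |∑ j, (P ^ (m+1)) i j * J j| ≤ ∑ j, |(P ^ (m+1)) i j * J j| :=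
          Finset.abs_sum_le_sum_abs _ _
      _ ≤ ∑ j, (P ^ (m+1)) i j * ‖J‖ := by
          refine Finset.sum_le_sum fun j _ => ?_
          rw [abs_mul, abs_of_nonneg ((hpow (m+1)).1 i j)]
          refine mul_le_mul_of_nonneg_left ?_ ((hpow (m+1)).1 i j)
          exact (norm_le_pi_norm J j).trans_eq' (Real.norm_eq_abs _).symm
      _ = ‖J‖ := by rw [← Finset.sum_mul, (hpow (m+1)).2.1 i, one_mul]
  -- summability of the norms of f ∘ w
  have hfwsum : Summable fun m => ‖f (w m)‖ :=
    Summable.of_nonneg_of_le (fun m => norm_nonneg _) hwnorm (hcsum.mul_right (normD pi J))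
  -- main chain
  have h1 : normD pi (M.mulVec J) = (1 - lam) * ‖∑' m, f (w m)‖ := by
    rw [hf, hMv, _root_.map_smul, norm_smul, Real.norm_eq_abs,
      abs_of_nonneg (by linarith : (0:ℝ) ≤ 1 - lam), ContinuousLinearMap.map_tsum f hwsum]
  have h2 : ‖∑' m, f (w m)‖ ≤ α * (1 - lam * α)⁻¹ * normD pi J := by
    calc ‖∑' m, f (w m)‖ ≤ ∑' m, ‖f (w m)‖ := norm_tsum_le_tsum_norm hfwsum
      _ ≤ ∑' m, c m * normD pi J :=
          Summable.tsum_le_tsum hwnorm hfwsum (hcsum.mul_right (normD pi J))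
      _ = (∑' m, c m) * normD pi J := tsum_mul_right
      _ = α * (1 - lam * α)⁻¹ * normD pi J := by rw [hctsum]
  have hden : (0:ℝ) < 1 - α * lam := by
    rw [mul_comm]; linarith
  rw [h1]
  calc (1 - lam) * ‖∑' m, f (w m)‖
      ≤ (1 - lam) * (α * (1 - lam * α)⁻¹ * normD pi J) :=
        mul_le_mul_of_nonneg_left h2 (by linarith)
    _ = (α * (1 - lam) / (1 - α * lam)) * normD pi J := by
        rw [mul_comm lam α, div_eq_mul_inv]; ring
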